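/- Let k, c ∈ ℝ with 0 < k and 4k < c, let t ∈ ℝ with t ≠ 0, and set λ = it ∈ ℂ. Then the cubic polynomial q(M) = (c − k)M³ − λM² + (4k − c)M + λ over ℂ has three pairwise distinct roots, and none of 0, 2, −2 is a root of q. -/

import Mathlib

open Polynomial

/-- For `0 < k`, `4k < c` and `λ = it` with `t ≠ 0` real, the cubic
`(c − k)M³ − λM² + (4k − c)M + λ` has three pairwise distinct roots, and none of
`0`, `2`, `−2` is a root. -/
theorem dp_M_cubic_distinct_roots (k c t : ℝ) (hk : 0 < k) (hck : 4 * k < c)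
    (ht : t ≠ 0) :
    Multiset.card
        ((C ((c : ℂ) - (k : ℂ)) * X ^ 3 - C (Complex.I * (t : ℂ)) * X ^ 2
            + C (4 * (k : ℂ) - (c : ℂ)) * X + C (Complex.I * (t : ℂ)) : ℂ[X]).roots)
        = 3 ∧
    ((C ((c : ℂ) - (k : ℂ)) * X ^ 3 - C (Complex.I * (t : ℂ)) * X ^ 2
        + C (4 * (k : ℂ) - (c : ℂ)) * X + C (Complex.I * (t : ℂ)) : ℂ[X]).roots).Nodup ∧
    (C ((c : ℂ) - (k : ℂ)) * X ^ 3 - C (Complex.I * (t : ℂ)) * X ^ 2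
        + C (4 * (k : ℂ) - (c : ℂ)) * X + C (Complex.I * (t : ℂ)) : ℂ[X]).eval 0 ≠ 0 ∧
    (C ((c : ℂ) - (k : ℂ)) * X ^ 3 - C (Complex.I * (t : ℂ)) * X ^ 2
        + C (4 * (k : ℂ) - (c : ℂ)) * X + C (Complex.I * (t : ℂ)) : ℂ[X]).eval 2 ≠ 0 ∧
    (C ((c : ℂ) - (k : ℂ)) * X ^ 3 - C (Complex.I * (t : ℂ)) * X ^ 2
        + C (4 * (k : ℂ) - (c : ℂ)) * X + C (Complex.I * (t : ℂ)) : ℂ[X]).eval (-2) ≠ 0 := by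
  set P : Cubic ℂ := ⟨(c : ℂ) - k, -(Complex.I * t), 4 * (k : ℂ) - c, Complex.I * t⟩ with hPdef
  have hPoly : (C ((c : ℂ) - (k : ℂ)) * X ^ 3 - C (Complex.I * (t : ℂ)) * X ^ 2
      + C (4 * (k : ℂ) - (c : ℂ)) * X + C (Complex.I * (t : ℂ)) : ℂ[X]) = P.toPoly := by
    simp only [Cubic.toPoly, hPdef, map_neg]
    ring
  have ha : P.a ≠ 0 := by
    simp only [hPdef]
    have : ((c - k : ℝ) : ℂ) ≠ 0 := by
      rw [Complex.ofReal_ne_zero]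
      linarith
    push_cast at this
    exact this
  have hsplits : Splits (P.toPoly.map (RingHom.id ℂ)) := IsAlgClosed.splits_domain _
  obtain ⟨x, y, z, h3⟩ := (Cubic.splits_iff_roots_eq_three ha).mp hsplits
  have hroots : (Cubic.map (RingHom.id ℂ) P).roots = P.toPoly.roots := by
    rw [Cubic.map_roots, Polynomial.map_id]
  -- discriminant is a positive real number
  have hQ : (0 : ℝ) < 8 * c ^ 2 + 44 * c * k - 61 * k ^ 2 := by nlinarith
  have hGpos : (0 : ℝ) < 4 * t ^ 4 + (8 * c ^ 2 + 44 * c * k - 61 * k ^ 2) * t ^ 2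
      + 4 * (c - k) * (c - 4 * k) ^ 3 := by
    have ht2 : (0 : ℝ) < t ^ 2 := by positivity
    have h1 : (0 : ℝ) < (c - k) * (c - 4 * k) ^ 3 := by
      exact mul_pos (by linarith) (pow_pos (by linarith) 3)
    nlinarith [pow_pos ht2 2, mul_pos hQ ht2]
  have hdisc : P.discr = ((4 * t ^ 4 + (8 * c ^ 2 + 44 * c * k - 61 * k ^ 2) * t ^ 2
      + 4 * (c - k) * (c - 4 * k) ^ 3 : ℝ) : ℂ) := by
    simp only [Cubic.discr, hPdef]
    push_cast
    linear_combination (4 * (Complex.I * (t : ℂ)) ^ 2 - 4 * (t : ℂ) ^ 2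
      + (4 * (k : ℂ) - c) ^ 2 - 27 * ((c : ℂ) - k) ^ 2
      - 18 * ((c : ℂ) - k) * (4 * (k : ℂ) - c)) * (t : ℂ) ^ 2 * Complex.I_sq
  have hdne : P.discr ≠ 0 := by
    rw [hdisc, Complex.ofReal_ne_zero]
    exact ne_of_gt hGpos
  have hnodup : P.toPoly.roots.Nodup := by
    rw [← hroots]
    exact (Cubic.discr_ne_zero_iff_roots_nodup ha hsplits).mp hdne
  have hcard : Multiset.card P.toPoly.roots = 3 := by
    rw [← hroots, h3]
    rfl
  have hIt : Complex.I * (t : ℂ) ≠ 0 := by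
    apply mul_ne_zero Complex.I_ne_zero
    rwa [Complex.ofReal_ne_zero]
  refine ⟨by rw [hPoly]; exact hcard, by rw [hPoly]; exact hnodup, ?_, ?_, ?_⟩
  · simpa using hIt
  · have hv : (C ((c : ℂ) - (k : ℂ)) * X ^ 3 - C (Complex.I * (t : ℂ)) * X ^ 2
        + C (4 * (k : ℂ) - (c : ℂ)) * X + C (Complex.I * (t : ℂ)) : ℂ[X]).eval 2
        = 6 * (c : ℂ) - 3 * (Complex.I * t) := by
      simp only [eval_add, eval_sub, eval_mul, eval_pow, eval_C, eval_X]
      ring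
    rw [hv]
    intro h
    have hre := congrArg Complex.re h
    simp [Complex.sub_re, Complex.mul_re, Complex.mul_im] at hre
    nlinarith
  · have hv : (C ((c : ℂ) - (k : ℂ)) * X ^ 3 - C (Complex.I * (t : ℂ)) * X ^ 2
        + C (4 * (k : ℂ) - (c : ℂ)) * X + C (Complex.I * (t : ℂ)) : ℂ[X]).eval (-2)
        = -(6 * (c : ℂ)) - 3 * (Complex.I * t) := by
      simp only [eval_add, eval_sub, eval_mul, eval_pow, eval_C, eval_X]
      ring
    rw [hv]
    intro h
    have hre := congrArg Complex.re h
    simp [Complex.sub_re, Complex.mul_re, Complex.mul_im] at hre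
    nlinarith
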